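/- Let A ⊆ ℕ₀ be a finite 3-free set, S(A) the Stanley sequence generated by A, and S(A,x) its counting function. Then for every real x ≥ 0, x − S(A,x) ≤ S(A,x)(S(A,x) − 1)/2 + max A. -/

import Mathlib

/-- A set of nonnegative integers is 3-free if it contains no three-term
arithmetic progression `a < b < c` with `a + c = 2b`. -/
def ThreeFree (S : Set ℕ) : Prop :=
  ∀ a ∈ S, ∀ b ∈ S, ∀ c ∈ S, a < b → b < c → a + c ≠ 2 * b

/-- `stanleyBelow A n` is the set of elements of the Stanley sequence generated by `A`
that are smaller than `n`: at stage `n` we include `n` itself if `n ∈ A`, or if `n`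
exceeds every element of `A` and adjoining `n` to everything chosen so far stays 3-free
(the greedy rule). -/
def stanleyBelow (A : Finset ℕ) : ℕ → Set ℕ
  | 0 => ∅
  | n + 1 => stanleyBelow A n ∪
      {m | m = n ∧ (n ∈ A ∨ ((∀ a ∈ A, a < n) ∧ ThreeFree (stanleyBelow A n ∪ {n})))}

/-- The Stanley sequence `S(A)` generated by `A`, as a set of nonnegative integers. -/
def stanley (A : Finset ℕ) : Set ℕ := ⋃ n, stanleyBelow A n

/-- The counting function `S(A,x) = #{s ∈ S(A) : s ≤ x}`. -/
noncomputable def stanleyCount (A : Finset ℕ) (x : ℝ) : ℕ :=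
  Nat.card {s : ℕ | s ∈ stanley A ∧ (s : ℝ) ≤ x}

/-- `H S n = #{(s₁,s₂) : s₁,s₂ ∈ S, s₁ < s₂, n = 2s₂ - s₁}`. -/
noncomputable def H (S : Set ℕ) (n : ℕ) : ℕ :=
  Nat.card {p : ℕ × ℕ | p.1 ∈ S ∧ p.2 ∈ S ∧ p.1 < p.2 ∧ n + p.1 = 2 * p.2}

lemma mem_below_succ {A : Finset ℕ} {n m : ℕ} :
    m ∈ stanleyBelow A (n+1) ↔ m ∈ stanleyBelow A n ∨
      (m = n ∧ (n ∈ A ∨ ((∀ a ∈ A, a < n) ∧ ThreeFree (stanleyBelow A n ∪ {n})))) := Iff.rfl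

lemma threeFree_mono {S T : Set ℕ} (h : S ⊆ T) (hT : ThreeFree T) : ThreeFree S :=
  fun a ha b hb c hc => hT a (h ha) b (h hb) c (h hc)

lemma mem_below_lt {A : Finset ℕ} {m n : ℕ} (h : m ∈ stanleyBelow A n) : m < n := by
  induction n with
  | zero => exact absurd h (by simp [stanleyBelow])
  | succ n ih =>
    rcases mem_below_succ.mp h with h | h
    · exact (ih h).trans (Nat.lt_succ_self n)
    · exact h.1 ▸ Nat.lt_succ_self n

lemma below_subset_stanley {A : Finset ℕ} (n : ℕ) : stanleyBelow A n ⊆ stanley A :=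
  fun m hm => Set.mem_iUnion.2 ⟨n, hm⟩

lemma mem_stanley_iff {A : Finset ℕ} {m : ℕ} :
    m ∈ stanley A ↔ m ∈ stanleyBelow A (m+1) := by
  constructor
  · intro h
    obtain ⟨n, hn⟩ := Set.mem_iUnion.mp h
    clear h
    induction n with
    | zero => exact absurd hn (by simp [stanleyBelow])
    | succ n ih =>
      rcases mem_below_succ.mp hn with h | h
      · exact ih h
      · obtain ⟨rfl, hcond⟩ := h
        exact mem_below_succ.mpr (Or.inr ⟨rfl, hcond⟩)
  · intro h
    exact below_subset_stanley _ h

lemma mem_below_cases {A : Finset ℕ} {k m : ℕ} (h : m ∈ stanleyBelow A k) :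
    m ∈ A ∨ ∀ a ∈ A, a < m := by
  induction k with
  | zero => exact absurd h (by simp [stanleyBelow])
  | succ k ih =>
    rcases mem_below_succ.mp h with h | h
    · exact ih h
    · rcases h.2 with h2 | h2
      · exact Or.inl (h.1 ▸ h2)
      · exact Or.inr (h.1 ▸ h2.1)

lemma threeFree_below (A : Finset ℕ) (hA3 : ThreeFree ↑A) (n : ℕ) :
    ThreeFree (stanleyBelow A n) := by
  induction n with
  | zero => intro a ha; exact absurd ha (by simp [stanleyBelow])
  | succ n ih =>
    have hsub : stanleyBelow A (n+1) ⊆ stanleyBelow A n ∪ {n} := by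
      intro m hm
      rcases mem_below_succ.mp hm with h | h
      · exact Or.inl h
      · exact Or.inr h.1
    by_cases hc : n ∈ A
    · refine threeFree_mono (fun m hm => ?_) hA3
      rcases hsub hm with h | h
      · rcases mem_below_cases h with h' | h'
        · exact h'
        · exact absurd (h' n hc) (Nat.lt_asymm (mem_below_lt h))
      · simp only [Set.mem_singleton_iff] at h
        simpa [h] using hc
    · by_cases hg : (∀ a ∈ A, a < n) ∧ ThreeFree (stanleyBelow A n ∪ {n})
      · exact threeFree_mono hsub hg.2
      · refine threeFree_mono (fun m hm => ?_) ih
        rcases mem_below_succ.mp hm with h | h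
        · exact h
        · exact absurd h.2 (by tauto)

lemma A_subset_stanley {A : Finset ℕ} {a : ℕ} (ha : a ∈ A) : a ∈ stanley A :=
  mem_stanley_iff.mpr (mem_below_succ.mpr (Or.inr ⟨rfl, Or.inl ha⟩))

lemma reject {A : Finset ℕ} (hA3 : ThreeFree ↑A) {n : ℕ}
    (hn : n ∉ stanley A) (hlt : ∀ a ∈ A, a < n) :
    ∃ a b, a ∈ stanley A ∧ b ∈ stanley A ∧ a < b ∧ b < n ∧ n + a = 2 * b := by
  have h1 : n ∉ stanleyBelow A (n+1) := fun h => hn (below_subset_stanley _ h)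
  have h2 : ¬ ThreeFree (stanleyBelow A n ∪ {n}) := fun h3 =>
    h1 (mem_below_succ.mpr (Or.inr ⟨rfl, Or.inr ⟨hlt, h3⟩⟩))
  unfold ThreeFree at h2
  push_neg at h2
  obtain ⟨a, ha, b, hb, c, hc, hab, hbc, heq⟩ := h2
  have hfree := threeFree_below A hA3 n
  have hcn : c = n := by
    rcases hc with hc | hc
    · exfalso
      have hcn' := mem_below_lt hc
      rcases ha with ha | ha
      · rcases hb with hb | hb
        · exact hfree a ha b hb c hc hab hbc heq
        · simp only [Set.mem_singleton_iff] at hb; omega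
      · simp only [Set.mem_singleton_iff] at ha; omega
    · simpa using hc
  subst hcn
  have han : a ∈ stanleyBelow A c := by
    rcases ha with h | h
    · exact h
    · simp only [Set.mem_singleton_iff] at h; omega
  have hbn : b ∈ stanleyBelow A c := by
    rcases hb with h | h
    · exact h
    · simp only [Set.mem_singleton_iff] at h; omega
  exact ⟨a, b, below_subset_stanley _ han, below_subset_stanley _ hbn, hab, hbc, by omega⟩

/-- `x - S(A,x) ≤ S(A,x)(S(A,x) - 1)/2 + max A`. -/
theorem sub_count_le (A : Finset ℕ) (hA : A.Nonempty)
    (hA3 : ThreeFree ↑A) (x : ℝ) (hx : 0 ≤ x) :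
    x - (stanleyCount A x : ℝ) ≤
      (stanleyCount A x : ℝ) * ((stanleyCount A x : ℝ) - 1) / 2 + (A.max' hA : ℝ) := by
  classical
  set maxA := A.max' hA with hmaxA
  set N := ⌊x⌋₊ with hN
  set T : Finset ℕ := (Finset.range (N+1)).filter (fun s => s ∈ stanley A) with hT
  have hcount : stanleyCount A x = T.card := by
    have hseteq : {s : ℕ | s ∈ stanley A ∧ (s : ℝ) ≤ x} = ↑T := by
      ext s
      simp only [hT, Finset.coe_filter, Set.mem_setOf_eq, Finset.mem_range, Nat.lt_succ_iff]
      rw [Nat.le_floor_iff hx]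
      tauto
    rw [stanleyCount, hseteq, Nat.card_coe_set_eq, Set.ncard_coe_finset]
  set B : Finset ℕ := (Finset.range (N+1)).filter (fun n => n ∉ stanley A ∧ maxA < n) with hB
  set B' : Finset ℕ := (Finset.range (N+1)).filter (fun n => n ∉ stanley A ∧ n ≤ maxA) with hB'
  -- B' is small
  have hB'card : B'.card ≤ maxA := by
    have : B' ⊆ Finset.range maxA := by
      intro n hn
      simp only [hB', Finset.mem_filter, Finset.mem_range] at hn ⊢
      rcases Nat.lt_or_ge n maxA with h | h
      · exact h
      · exfalso
        have : n = maxA := le_antisymm hn.2.2 h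
        exact hn.2.1 (this ▸ A_subset_stanley (A.max'_mem hA))
    simpa using Finset.card_le_card this
  -- pairs
  set P : Finset (ℕ × ℕ) := (T ×ˢ T).filter (fun p => p.1 < p.2) with hP
  have hBP : B.card ≤ P.card := by
    apply Finset.card_le_card_of_surjOn (fun p : ℕ × ℕ => 2 * p.2 - p.1)
    intro n hn
    simp only [hB, Finset.coe_filter, Set.mem_setOf_eq, Finset.mem_range, Nat.lt_succ_iff] at hn
    obtain ⟨hnN, hns, hnA⟩ := hn
    obtain ⟨a, b, hsa, hsb, hab, hbn, heq⟩ := reject hA3 hns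
      (fun a ha => lt_of_le_of_lt (A.le_max' a ha) hnA)
    refine ⟨(a, b), ?_, show 2 * b - a = n by omega⟩
    simp only [hP, Finset.coe_filter, Set.mem_setOf_eq, Finset.mem_product, hT,
      Finset.mem_filter, Finset.mem_range, Nat.lt_succ_iff]
    exact ⟨⟨⟨by omega, hsa⟩, ⟨by omega, hsb⟩⟩, hab⟩
  have hPcard : P.card ≤ T.card.choose 2 := by
    rw [← Finset.card_powersetCard 2 T]
    apply Finset.card_le_card_of_injOn (fun p : ℕ × ℕ => {p.1, p.2})
    · intro p hp
      simp only [hP, Finset.mem_coe, Finset.mem_filter, Finset.mem_product] at hp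
      rw [Finset.mem_coe, Finset.mem_powersetCard]
      constructor
      · intro m hm
        simp only [Finset.mem_insert, Finset.mem_singleton] at hm
        rcases hm with rfl | rfl
        · exact hp.1.1
        · exact hp.1.2
      · rw [Finset.card_insert_of_notMem (by simp; omega), Finset.card_singleton]
    · intro p hp q hq hpq
      simp only [hP, Finset.coe_filter, Set.mem_setOf_eq, Finset.mem_product] at hp hq
      have hpq' : ({p.1, p.2} : Finset ℕ) = {q.1, q.2} := hpq
      have h1 : p.1 ∈ ({q.1, q.2} : Finset ℕ) := hpq' ▸ (by simp)
      have h2 : p.2 ∈ ({q.1, q.2} : Finset ℕ) := hpq' ▸ (by simp)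
      have h3 : q.1 ∈ ({p.1, p.2} : Finset ℕ) := hpq'.symm ▸ (by simp)
      simp only [Finset.mem_insert, Finset.mem_singleton] at h1 h2 h3
      have := hp.2
      have := hq.2
      ext <;> omega
  -- range (N+1) ⊆ T ∪ B ∪ B'
  have hcover : Finset.range (N+1) ⊆ T ∪ B ∪ B' := by
    intro n hn
    simp only [Finset.mem_union, hT, hB, hB', Finset.mem_filter, hn, true_and]
    by_cases h : n ∈ stanley A
    · exact Or.inl (Or.inl h)
    · rcases Nat.lt_or_ge maxA n with h' | h'
      · exact Or.inl (Or.inr ⟨h, h'⟩)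
      · exact Or.inr ⟨h, h'⟩
  have hmain : N + 1 ≤ T.card + T.card.choose 2 + maxA := by
    calc N + 1 = (Finset.range (N+1)).card := (Finset.card_range _).symm
    _ ≤ (T ∪ B ∪ B').card := Finset.card_le_card hcover
    _ ≤ T.card + B.card + B'.card :=
        le_trans (Finset.card_union_le _ _) (by gcongr; exact Finset.card_union_le _ _)
    _ ≤ T.card + T.card.choose 2 + maxA := by
        have := le_trans hBP hPcard
        omega
  -- real arithmetic
  have hxN : x < (N : ℝ) + 1 := Nat.lt_floor_add_one x
  have hmainR : (N : ℝ) + 1 ≤ (T.card : ℝ) + (T.card.choose 2 : ℝ) + (maxA : ℝ) := by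
    exact_mod_cast hmain
  have hchoose : ((T.card.choose 2 : ℕ) : ℝ) = (T.card : ℝ) * ((T.card : ℝ) - 1) / 2 :=
    Nat.cast_choose_two (K := ℝ) T.card
  rw [hcount]
  linarith
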